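/- arXiv:1601.07236 — 2 statements merged into one kernel-verified Lean document; each statement's English description precedes it below -/
import Mathlib

section
/- Assume w is quasi-definite and let C ∈ ℂ^{N×N} satisfy C·w(ζ) = w(ζ)·C for all ζ ∈ 𝕋. Then C commutes with every moment μ̂(j), j ∈ ℤ; C commutes with the values P^L_{1,n}(z), P^R_{1,n}(z), P̃^L_{2,n}(z), P̃^R_{2,n}(z) for every n ≥ 0 and every z ∈ ℂ; C commutes with every Verblunsky matrix α^L_{1,n}, α^R_{1,n}, (α^L_{2,n})†, (α^R_{2,n})†; and C commutes with every quasi-tau matrix H^L_n and H^R_n. -/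
set_option maxHeartbeats 1000000


open Complex Matrix

noncomputable section

/-- Normalized matrix-valued integral over the unit circle:
`∮ f(ζ) dm(ζ) := (2π)⁻¹ ∫₀^{2π} f(e^{iθ}) dθ`, taken entrywise. -/
def circInt (N : ℕ) (f : ℂ → Matrix (Fin N) (Fin N) ℂ) : Matrix (Fin N) (Fin N) ℂ :=
  Matrix.of fun i j =>
    (2 * Real.pi)⁻¹ • ∫ θ in (0:ℝ)..(2 * Real.pi), f (Complex.exp (θ * Complex.I)) i j

/-- Evaluation at `z` of the matrix polynomial with coefficients `c 0, …, c n`. -/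
def mPolyEval {N : ℕ} (c : ℕ → Matrix (Fin N) (Fin N) ℂ) (n : ℕ) (z : ℂ) :
    Matrix (Fin N) (Fin N) ℂ :=
  ∑ k ∈ Finset.range (n + 1), z ^ k • c k

/-- Evaluation at `z` of the reciprocal polynomial `P̃(z) = ∑_{k=0}^n (c (n-k))ᴴ z^k`. -/
def mRecipEval {N : ℕ} (c : ℕ → Matrix (Fin N) (Fin N) ℂ) (n : ℕ) (z : ℂ) :
    Matrix (Fin N) (Fin N) ℂ :=
  ∑ k ∈ Finset.range (n + 1), z ^ k • (c (n - k))ᴴ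

/-- The `j`-th moment `μ̂ j = ∮ w(ζ) ζ^{-j} dm(ζ)` of the matrix weight `w`. -/
def mMoment (N : ℕ) (w : ℂ → Matrix (Fin N) (Fin N) ℂ) (j : ℤ) : Matrix (Fin N) (Fin N) ℂ :=
  circInt N fun ζ => ζ ^ (-j) • w ζ

/-- Quasi-definiteness: all the truncated block Toeplitz moment matrices
`M^L_[n]` and `M^R_[n]` are invertible. -/
def QuasiDef (N : ℕ) (w : ℂ → Matrix (Fin N) (Fin N) ℂ) : Prop :=
  ∀ n : ℕ, 1 ≤ n →
    IsUnit (Matrix.of fun p q : Fin n × Fin N =>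
      mMoment N w ((p.1 : ℤ) - (q.1 : ℤ)) p.2 q.2) ∧
    IsUnit (Matrix.of fun p q : Fin n × Fin N =>
      mMoment N w ((q.1 : ℤ) - (p.1 : ℤ)) p.2 q.2)

/-- `P n` lists the coefficients of the monic degree-`n` Szegő polynomial `P^L_{1,n}`:
monicity together with `∮ P^L_{1,n}(ζ) w(ζ) ζ^{-j} dm(ζ) = 0` for `j = 0,…,n-1`. -/
def IsSzPL1 (N : ℕ) (w : ℂ → Matrix (Fin N) (Fin N) ℂ)
    (P : ℕ → ℕ → Matrix (Fin N) (Fin N) ℂ) : Prop :=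
  ∀ n : ℕ, P n n = 1 ∧ (∀ k, n < k → P n k = 0) ∧
    ∀ j < n, circInt N (fun ζ => ζ ^ (-(j : ℤ)) • (mPolyEval (P n) n ζ * w ζ)) = 0

/-- `P n` lists the coefficients of the monic degree-`n` Szegő polynomial `P^R_{1,n}`:
monicity together with `∮ ζ^{-j} w(ζ) P^R_{1,n}(ζ) dm(ζ) = 0` for `j = 0,…,n-1`. -/
def IsSzPR1 (N : ℕ) (w : ℂ → Matrix (Fin N) (Fin N) ℂ)
    (P : ℕ → ℕ → Matrix (Fin N) (Fin N) ℂ) : Prop :=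
  ∀ n : ℕ, P n n = 1 ∧ (∀ k, n < k → P n k = 0) ∧
    ∀ j < n, circInt N (fun ζ => ζ ^ (-(j : ℤ)) • (w ζ * mPolyEval (P n) n ζ)) = 0

/-- `P n` lists the coefficients of the monic degree-`n` Szegő polynomial `P^L_{2,n}`:
monicity together with `∮ ζ^{j} w(ζ) (P^L_{2,n}(ζ))† dm(ζ) = 0` for `j = 0,…,n-1`. -/
def IsSzPL2 (N : ℕ) (w : ℂ → Matrix (Fin N) (Fin N) ℂ)
    (P : ℕ → ℕ → Matrix (Fin N) (Fin N) ℂ) : Prop :=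
  ∀ n : ℕ, P n n = 1 ∧ (∀ k, n < k → P n k = 0) ∧
    ∀ j < n, circInt N (fun ζ => ζ ^ j • (w ζ * (mPolyEval (P n) n ζ)ᴴ)) = 0

/-- `P n` lists the coefficients of the monic degree-`n` Szegő polynomial `P^R_{2,n}`:
monicity together with `∮ (P^R_{2,n}(ζ))† w(ζ) ζ^{j} dm(ζ) = 0` for `j = 0,…,n-1`. -/
def IsSzPR2 (N : ℕ) (w : ℂ → Matrix (Fin N) (Fin N) ℂ)
    (P : ℕ → ℕ → Matrix (Fin N) (Fin N) ℂ) : Prop :=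
  ∀ n : ℕ, P n n = 1 ∧ (∀ k, n < k → P n k = 0) ∧
    ∀ j < n, circInt N (fun ζ => ζ ^ j • ((mPolyEval (P n) n ζ)ᴴ * w ζ)) = 0

/-- The Verblunsky matrix of the family `P`: the value at `0` of its `n`-th member. -/
def szVer {N : ℕ} (P : ℕ → ℕ → Matrix (Fin N) (Fin N) ℂ) (n : ℕ) :
    Matrix (Fin N) (Fin N) ℂ :=
  mPolyEval (P n) n 0

/-- Quasi-tau matrix `H^L_n = ∮ P^L_{1,n}(ζ) w(ζ) ζ^{-n} dm(ζ)` (from the family `P^L_{1,·}`). -/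
def szHL (N : ℕ) (w : ℂ → Matrix (Fin N) (Fin N) ℂ)
    (P : ℕ → ℕ → Matrix (Fin N) (Fin N) ℂ) (n : ℕ) : Matrix (Fin N) (Fin N) ℂ :=
  circInt N fun ζ => ζ ^ (-(n : ℤ)) • (mPolyEval (P n) n ζ * w ζ)

/-- Quasi-tau matrix `H^R_n = ∮ ζ^{-n} w(ζ) P^R_{1,n}(ζ) dm(ζ)` (from the family `P^R_{1,·}`). -/
def szHR (N : ℕ) (w : ℂ → Matrix (Fin N) (Fin N) ℂ)
    (P : ℕ → ℕ → Matrix (Fin N) (Fin N) ℂ) (n : ℕ) : Matrix (Fin N) (Fin N) ℂ :=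
  circInt N fun ζ => ζ ^ (-(n : ℤ)) • (w ζ * mPolyEval (P n) n ζ)

/-- Cauchy transform `Q^L_{1,n}(z) = ∮ ζ^{-n} P^L_{1,n}(ζ) w(ζ) (1-ζ^{-1}z)^{-1} dm(ζ)`. -/
def szQL1 (N : ℕ) (w : ℂ → Matrix (Fin N) (Fin N) ℂ)
    (P : ℕ → ℕ → Matrix (Fin N) (Fin N) ℂ) (n : ℕ) (z : ℂ) : Matrix (Fin N) (Fin N) ℂ :=
  circInt N fun ζ => (ζ ^ (-(n : ℤ)) * (1 - ζ⁻¹ * z)⁻¹) • (mPolyEval (P n) n ζ * w ζ)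

/-- Cauchy transform `Q^R_{2,n}(z) = ∮ ζ^{-(n+1)} P̃^R_{2,n}(ζ) w(ζ) (1-ζ^{-1}z)^{-1} dm(ζ)`. -/
def szQR2 (N : ℕ) (w : ℂ → Matrix (Fin N) (Fin N) ℂ)
    (P : ℕ → ℕ → Matrix (Fin N) (Fin N) ℂ) (n : ℕ) (z : ℂ) : Matrix (Fin N) (Fin N) ℂ :=
  circInt N fun ζ => (ζ ^ (-((n : ℤ) + 1)) * (1 - ζ⁻¹ * z)⁻¹) • (mRecipEval (P n) n ζ * w ζ)

section Helpers

open MeasureTheory intervalIntegral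

variable {N : ℕ}

lemma circ_ne (θ : ℝ) : Complex.exp (↑θ * Complex.I) ≠ 0 := Complex.exp_ne_zero _

lemma circ_abs (θ : ℝ) : ‖Complex.exp (↑θ * Complex.I)‖ = 1 :=
  Complex.norm_exp_ofReal_mul_I θ

lemma circ_conj (θ : ℝ) :
    (starRingEnd ℂ) (Complex.exp (↑θ * Complex.I)) = (Complex.exp (↑θ * Complex.I))⁻¹ := by
  rw [← Complex.exp_conj, ← Complex.exp_neg]
  congr 1
  simp [Complex.conj_I]

lemma cont_circ : Continuous fun θ : ℝ => Complex.exp (↑θ * Complex.I) :=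
  Complex.continuous_exp.comp (Complex.continuous_ofReal.mul continuous_const)

lemma integ_entry (w : ℂ → Matrix (Fin N) (Fin N) ℂ) (hw : Continuous w) (m : ℤ) (a b : Fin N) :
    IntervalIntegrable
      (fun θ : ℝ => (Complex.exp (↑θ * Complex.I) ^ m • w (Complex.exp (↑θ * Complex.I))) a b)
      volume 0 (2 * Real.pi) := by
  have h1 : Continuous fun θ : ℝ => Complex.exp (↑θ * Complex.I) ^ m :=
    cont_circ.zpow₀ m fun θ => Or.inl (circ_ne θ)
  have h2 : Continuous fun θ : ℝ => w (Complex.exp (↑θ * Complex.I)) a b :=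
    (hw.comp cont_circ).matrix_elem a b
  have h3 := (h1.mul h2).intervalIntegrable (μ := volume) 0 (2 * Real.pi)
  simpa [Matrix.smul_apply, smul_eq_mul, Pi.mul_def] using h3

lemma circInt_congr (f g : ℂ → Matrix (Fin N) (Fin N) ℂ)
    (h : ∀ θ : ℝ, f (Complex.exp (↑θ * Complex.I)) = g (Complex.exp (↑θ * Complex.I))) :
    circInt N f = circInt N g := by
  unfold circInt
  ext a b
  simp only [Matrix.of_apply]
  congr 1
  apply intervalIntegral.integral_congr
  intro θ _
  exact congrFun (congrFun (h θ) a) b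

lemma circInt_mul_left (A : Matrix (Fin N) (Fin N) ℂ) (f : ℂ → Matrix (Fin N) (Fin N) ℂ)
    (hf : ∀ a b, IntervalIntegrable (fun θ : ℝ => f (Complex.exp (↑θ * Complex.I)) a b)
      volume 0 (2 * Real.pi)) :
    circInt N (fun ζ => A * f ζ) = A * circInt N f := by
  ext a b
  simp only [circInt, Matrix.of_apply, Matrix.mul_apply]
  rw [intervalIntegral.integral_finset_sum (fun k _ => (hf k b).const_mul _)]
  simp only [intervalIntegral.integral_const_mul]
  rw [Finset.smul_sum]
  exact Finset.sum_congr rfl fun k _ => (mul_smul_comm _ _ _).symm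

lemma circInt_mul_right (A : Matrix (Fin N) (Fin N) ℂ) (f : ℂ → Matrix (Fin N) (Fin N) ℂ)
    (hf : ∀ a b, IntervalIntegrable (fun θ : ℝ => f (Complex.exp (↑θ * Complex.I)) a b)
      volume 0 (2 * Real.pi)) :
    circInt N (fun ζ => f ζ * A) = circInt N f * A := by
  ext a b
  simp only [circInt, Matrix.of_apply, Matrix.mul_apply]
  rw [intervalIntegral.integral_finset_sum (fun k _ => (hf a k).mul_const _)]
  simp only [intervalIntegral.integral_mul_const]
  rw [Finset.smul_sum]
  exact Finset.sum_congr rfl fun k _ => (smul_mul_assoc _ _ _).symm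

lemma circInt_sum {ι : Type*} (s : Finset ι) (f : ι → ℂ → Matrix (Fin N) (Fin N) ℂ)
    (hf : ∀ i ∈ s, ∀ a b, IntervalIntegrable
      (fun θ : ℝ => f i (Complex.exp (↑θ * Complex.I)) a b) volume 0 (2 * Real.pi)) :
    circInt N (fun ζ => ∑ i ∈ s, f i ζ) = ∑ i ∈ s, circInt N (f i) := by
  ext a b
  simp only [circInt, Matrix.of_apply, Matrix.sum_apply]
  rw [intervalIntegral.integral_finset_sum (fun i hi => hf i hi a b), Finset.smul_sum]

lemma comm_moment (w : ℂ → Matrix (Fin N) (Fin N) ℂ) (hw : Continuous w)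
    (C : Matrix (Fin N) (Fin N) ℂ)
    (hC : ∀ ζ : ℂ, ‖ζ‖ = 1 → C * w ζ = w ζ * C) (j : ℤ) :
    C * mMoment N w j = mMoment N w j * C := by
  have h1 : C * mMoment N w j = circInt N (fun ζ => C * (ζ ^ (-j) • w ζ)) :=
    (circInt_mul_left C (fun ζ => ζ ^ (-j) • w ζ) (fun a b => integ_entry w hw (-j) a b)).symm
  have h2 : mMoment N w j * C = circInt N (fun ζ => (ζ ^ (-j) • w ζ) * C) :=
    (circInt_mul_right C (fun ζ => ζ ^ (-j) • w ζ) (fun a b => integ_entry w hw (-j) a b)).symm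
  rw [h1, h2]
  apply circInt_congr
  intro θ
  rw [mul_smul_comm, smul_mul_assoc, hC _ (circ_abs θ)]

lemma integ_entry_ml (w : ℂ → Matrix (Fin N) (Fin N) ℂ) (hw : Continuous w)
    (A : Matrix (Fin N) (Fin N) ℂ) (m : ℤ) (a b : Fin N) :
    IntervalIntegrable
      (fun θ : ℝ => (A * (Complex.exp (↑θ * Complex.I) ^ m • w (Complex.exp (↑θ * Complex.I)))) a b)
      volume 0 (2 * Real.pi) := by
  simp only [Matrix.mul_apply]
  have h := IntervalIntegrable.sum (f := fun (k : Fin N) (θ : ℝ) =>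
      A a k * (Complex.exp (↑θ * Complex.I) ^ m • w (Complex.exp (↑θ * Complex.I))) k b)
    Finset.univ (fun k _ => (integ_entry w hw m k b).const_mul _)
  simpa only [Finset.sum_fn] using h

lemma integ_entry_mr (w : ℂ → Matrix (Fin N) (Fin N) ℂ) (hw : Continuous w)
    (A : Matrix (Fin N) (Fin N) ℂ) (m : ℤ) (a b : Fin N) :
    IntervalIntegrable
      (fun θ : ℝ => ((Complex.exp (↑θ * Complex.I) ^ m • w (Complex.exp (↑θ * Complex.I))) * A) a b)
      volume 0 (2 * Real.pi) := by
  simp only [Matrix.mul_apply]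
  have h := IntervalIntegrable.sum (f := fun (k : Fin N) (θ : ℝ) =>
      (Complex.exp (↑θ * Complex.I) ^ m • w (Complex.exp (↑θ * Complex.I))) a k * A k b)
    Finset.univ (fun k _ => (integ_entry w hw m a k).mul_const _)
  simpa only [Finset.sum_fn] using h

lemma expand_L1 (w : ℂ → Matrix (Fin N) (Fin N) ℂ) (hw : Continuous w)
    (c : ℕ → Matrix (Fin N) (Fin N) ℂ) (n : ℕ) (j : ℤ) :
    circInt N (fun ζ => ζ ^ (-j) • (mPolyEval c n ζ * w ζ)) =
      ∑ k ∈ Finset.range (n + 1), c k * mMoment N w (j - k) := by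
  have h0 : circInt N (fun ζ => ζ ^ (-j) • (mPolyEval c n ζ * w ζ))
      = circInt N (fun ζ => ∑ k ∈ Finset.range (n + 1), c k * (ζ ^ (-(j - (k : ℤ))) • w ζ)) := by
    apply circInt_congr
    intro θ
    have hz := circ_ne θ
    rw [mPolyEval, Finset.sum_mul, Finset.smul_sum]
    refine Finset.sum_congr rfl fun k _ => ?_
    rw [smul_mul_assoc, smul_smul, mul_smul_comm]
    congr 1
    rw [← zpow_natCast (Complex.exp (↑θ * Complex.I)) k, ← zpow_add₀ hz]
    congr 1
    ring
  rw [h0, circInt_sum (Finset.range (n + 1))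
      (fun k ζ => c k * (ζ ^ (-(j - (k : ℤ))) • w ζ))
      (fun k _ a b => integ_entry_ml w hw (c k) _ a b)]
  refine Finset.sum_congr rfl fun k _ => ?_
  exact circInt_mul_left (c k) (fun ζ => ζ ^ (-(j - (k : ℤ))) • w ζ)
    (fun a b => integ_entry w hw _ a b)

lemma expand_R1 (w : ℂ → Matrix (Fin N) (Fin N) ℂ) (hw : Continuous w)
    (c : ℕ → Matrix (Fin N) (Fin N) ℂ) (n : ℕ) (j : ℤ) :
    circInt N (fun ζ => ζ ^ (-j) • (w ζ * mPolyEval c n ζ)) =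
      ∑ k ∈ Finset.range (n + 1), mMoment N w (j - k) * c k := by
  have h0 : circInt N (fun ζ => ζ ^ (-j) • (w ζ * mPolyEval c n ζ))
      = circInt N (fun ζ => ∑ k ∈ Finset.range (n + 1), (ζ ^ (-(j - (k : ℤ))) • w ζ) * c k) := by
    apply circInt_congr
    intro θ
    have hz := circ_ne θ
    rw [mPolyEval, Finset.mul_sum, Finset.smul_sum]
    refine Finset.sum_congr rfl fun k _ => ?_
    rw [mul_smul_comm, smul_smul, smul_mul_assoc]
    congr 1
    rw [← zpow_natCast (Complex.exp (↑θ * Complex.I)) k, ← zpow_add₀ hz]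
    congr 1
    ring
  rw [h0, circInt_sum (Finset.range (n + 1))
      (fun k ζ => (ζ ^ (-(j - (k : ℤ))) • w ζ) * c k)
      (fun k _ a b => integ_entry_mr w hw (c k) _ a b)]
  refine Finset.sum_congr rfl fun k _ => ?_
  exact circInt_mul_right (c k) (fun ζ => ζ ^ (-(j - (k : ℤ))) • w ζ)
    (fun a b => integ_entry w hw _ a b)

lemma star_circ_pow (θ : ℝ) (k : ℕ) :
    star ((Complex.exp (↑θ * Complex.I)) ^ k)
      = (Complex.exp (↑θ * Complex.I)) ^ (-(k : ℤ)) := by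
  rw [star_pow, RCLike.star_def, circ_conj, inv_pow, ← zpow_natCast, ← _root_.zpow_neg]

lemma expand_L2 (w : ℂ → Matrix (Fin N) (Fin N) ℂ) (hw : Continuous w)
    (c : ℕ → Matrix (Fin N) (Fin N) ℂ) (n : ℕ) (j : ℕ) :
    circInt N (fun ζ => ζ ^ j • (w ζ * (mPolyEval c n ζ)ᴴ)) =
      ∑ k ∈ Finset.range (n + 1), mMoment N w ((k : ℤ) - j) * (c k)ᴴ := by
  have h0 : circInt N (fun ζ => ζ ^ j • (w ζ * (mPolyEval c n ζ)ᴴ))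
      = circInt N (fun ζ => ∑ k ∈ Finset.range (n + 1),
          (ζ ^ (-((k : ℤ) - j)) • w ζ) * (c k)ᴴ) := by
    apply circInt_congr
    intro θ
    have hz := circ_ne θ
    rw [mPolyEval, Matrix.conjTranspose_sum, Finset.mul_sum, Finset.smul_sum]
    refine Finset.sum_congr rfl fun k _ => ?_
    rw [Matrix.conjTranspose_smul, mul_smul_comm, smul_smul, smul_mul_assoc]
    congr 1
    rw [star_circ_pow, ← zpow_natCast (Complex.exp (↑θ * Complex.I)) j, ← zpow_add₀ hz]
    congr 1
    ring
  rw [h0, circInt_sum (Finset.range (n + 1))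
      (fun k ζ => (ζ ^ (-((k : ℤ) - j)) • w ζ) * (c k)ᴴ)
      (fun k _ a b => integ_entry_mr w hw ((c k)ᴴ) _ a b)]
  refine Finset.sum_congr rfl fun k _ => ?_
  exact circInt_mul_right ((c k)ᴴ) (fun ζ => ζ ^ (-((k : ℤ) - j)) • w ζ)
    (fun a b => integ_entry w hw _ a b)

lemma expand_R2 (w : ℂ → Matrix (Fin N) (Fin N) ℂ) (hw : Continuous w)
    (c : ℕ → Matrix (Fin N) (Fin N) ℂ) (n : ℕ) (j : ℕ) :
    circInt N (fun ζ => ζ ^ j • ((mPolyEval c n ζ)ᴴ * w ζ)) =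
      ∑ k ∈ Finset.range (n + 1), (c k)ᴴ * mMoment N w ((k : ℤ) - j) := by
  have h0 : circInt N (fun ζ => ζ ^ j • ((mPolyEval c n ζ)ᴴ * w ζ))
      = circInt N (fun ζ => ∑ k ∈ Finset.range (n + 1),
          (c k)ᴴ * (ζ ^ (-((k : ℤ) - j)) • w ζ)) := by
    apply circInt_congr
    intro θ
    have hz := circ_ne θ
    rw [mPolyEval, Matrix.conjTranspose_sum, Finset.sum_mul, Finset.smul_sum]
    refine Finset.sum_congr rfl fun k _ => ?_
    rw [Matrix.conjTranspose_smul, smul_mul_assoc, smul_smul, mul_smul_comm]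
    congr 1
    rw [star_circ_pow, ← zpow_natCast (Complex.exp (↑θ * Complex.I)) j, ← zpow_add₀ hz]
    congr 1
    ring
  rw [h0, circInt_sum (Finset.range (n + 1))
      (fun k ζ => (c k)ᴴ * (ζ ^ (-((k : ℤ) - j)) • w ζ))
      (fun k _ a b => integ_entry_ml w hw ((c k)ᴴ) _ a b)]
  refine Finset.sum_congr rfl fun k _ => ?_
  exact circInt_mul_left ((c k)ᴴ) (fun ζ => ζ ^ (-((k : ℤ) - j)) • w ζ)
    (fun a b => integ_entry w hw _ a b)

lemma cancel_right {m : Type*} [Fintype m] [DecidableEq m] (M : Matrix m m ℂ) (hM : IsUnit M)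
    {p : Type*} [Fintype p] (X : Matrix p m ℂ) (hX : X * M = 0) : X = 0 := by
  obtain ⟨u, hu⟩ := hM
  have h1 : M * (↑u⁻¹ : Matrix m m ℂ) = 1 := by rw [← hu]; exact u.mul_inv
  calc X = X * (M * (↑u⁻¹ : Matrix m m ℂ)) := by rw [h1, Matrix.mul_one]
    _ = (X * M) * (↑u⁻¹ : Matrix m m ℂ) := by rw [Matrix.mul_assoc]
    _ = 0 := by rw [hX, Matrix.zero_mul]

lemma cancel_left {m : Type*} [Fintype m] [DecidableEq m] (M : Matrix m m ℂ) (hM : IsUnit M)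
    {p : Type*} [Fintype p] (X : Matrix m p ℂ) (hX : M * X = 0) : X = 0 := by
  obtain ⟨u, hu⟩ := hM
  have h1 : (↑u⁻¹ : Matrix m m ℂ) * M = 1 := by rw [← hu]; exact u.inv_mul
  calc X = ((↑u⁻¹ : Matrix m m ℂ) * M) * X := by rw [h1, Matrix.one_mul]
    _ = (↑u⁻¹ : Matrix m m ℂ) * (M * X) := by rw [Matrix.mul_assoc]
    _ = 0 := by rw [hX, Matrix.mul_zero]

lemma row_system {n : ℕ} (M : Matrix (Fin n × Fin N) (Fin n × Fin N) ℂ)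
    (hM : IsUnit M) (D : Fin n → Matrix (Fin N) (Fin N) ℂ)
    (hD : ∀ (j : Fin n) (a b : Fin N),
      ∑ k : Fin n, ∑ c : Fin N, D k a c * M (k, c) (j, b) = 0) :
    ∀ k, D k = 0 := by
  have hX : (Matrix.of fun (a : Fin N) (p : Fin n × Fin N) => D p.1 a p.2) * M = 0 := by
    ext a q
    rw [Matrix.mul_apply, Fintype.sum_prod_type]
    simpa using hD q.1 a q.2
  have h0 := cancel_right M hM _ hX
  intro k
  ext a b
  have h2 := congrFun (congrFun h0 a) (k, b)
  simpa using h2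

lemma col_system {n : ℕ} (M : Matrix (Fin n × Fin N) (Fin n × Fin N) ℂ)
    (hM : IsUnit M) (D : Fin n → Matrix (Fin N) (Fin N) ℂ)
    (hD : ∀ (j : Fin n) (a b : Fin N),
      ∑ k : Fin n, ∑ c : Fin N, M (j, a) (k, c) * D k c b = 0) :
    ∀ k, D k = 0 := by
  have hX : M * (Matrix.of fun (p : Fin n × Fin N) (b : Fin N) => D p.1 p.2 b) = 0 := by
    ext q b
    rw [Matrix.mul_apply, Fintype.sum_prod_type]
    simpa using hD q.1 q.2 b
  have h0 := cancel_left M hM _ hX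
  intro k
  ext a b
  have h2 := congrFun (congrFun h0 (k, a)) b
  simpa using h2

lemma comm_sum_smul {ι : Type*} (s : Finset ι) (z : ι → ℂ)
    (A : ι → Matrix (Fin N) (Fin N) ℂ) {C : Matrix (Fin N) (Fin N) ℂ}
    (h : ∀ i ∈ s, C * A i = A i * C) :
    C * (∑ i ∈ s, z i • A i) = (∑ i ∈ s, z i • A i) * C := by
  rw [Finset.mul_sum, Finset.sum_mul]
  refine Finset.sum_congr rfl fun i hi => ?_
  rw [mul_smul_comm, smul_mul_assoc, h i hi]

lemma comm_sum_mul {ι : Type*} (s : Finset ι) (A B : ι → Matrix (Fin N) (Fin N) ℂ)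
    {C : Matrix (Fin N) (Fin N) ℂ}
    (hA : ∀ i ∈ s, C * A i = A i * C) (hB : ∀ i ∈ s, C * B i = B i * C) :
    C * (∑ i ∈ s, A i * B i) = (∑ i ∈ s, A i * B i) * C := by
  rw [Finset.mul_sum, Finset.sum_mul]
  refine Finset.sum_congr rfl fun i hi => ?_
  rw [← Matrix.mul_assoc, hA i hi, Matrix.mul_assoc, hB i hi, ← Matrix.mul_assoc]

lemma mPolyEval_zero (c : ℕ → Matrix (Fin N) (Fin N) ℂ) (n : ℕ) :
    mPolyEval c n 0 = c 0 := by
  rw [mPolyEval, Finset.sum_eq_single 0]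
  · simp
  · intro i _ hi; simp [zero_pow hi]
  · simp

lemma comm_coeff_row {w : ℂ → Matrix (Fin N) (Fin N) ℂ} {C : Matrix (Fin N) (Fin N) ℂ}
    (hmom : ∀ j : ℤ, C * mMoment N w j = mMoment N w j * C)
    {n : ℕ} (g : ℕ → ℕ → ℤ)
    (M : Matrix (Fin n × Fin N) (Fin n × Fin N) ℂ) (hM : IsUnit M)
    (hMe : ∀ (p q : Fin n × Fin N), M p q = mMoment N w (g (q.1 : ℕ) (p.1 : ℕ)) p.2 q.2)
    (A : ℕ → Matrix (Fin N) (Fin N) ℂ) (hAn : A n = 1)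
    (hrel : ∀ j < n, ∑ i ∈ Finset.range (n + 1), A i * mMoment N w (g j i) = 0) :
    ∀ k, k < n → C * A k = A k * C := by
  intro k hk
  have hDz := row_system M hM (fun i : Fin n => C * A (i : ℕ) - A (i : ℕ) * C) ?_ ⟨k, hk⟩
  · exact sub_eq_zero.mp hDz
  · intro j a b
    have hS : ∑ i ∈ Finset.range n, A i * mMoment N w (g (j : ℕ) i)
        = - mMoment N w (g (j : ℕ) n) := by
      have h := hrel (j : ℕ) j.isLt
      rw [Finset.sum_range_succ, hAn, Matrix.one_mul] at h
      exact eq_neg_of_add_eq_zero_left h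
    have key : ∑ i : Fin n,
        (C * A (i : ℕ) - A (i : ℕ) * C) * mMoment N w (g (j : ℕ) (i : ℕ)) = 0 := by
      have e1 : ∑ i : Fin n, (C * A (i : ℕ)) * mMoment N w (g (j : ℕ) (i : ℕ))
          = C * ∑ i ∈ Finset.range n, A i * mMoment N w (g (j : ℕ) i) := by
        rw [Finset.mul_sum,
          ← Fin.sum_univ_eq_sum_range (fun i => C * (A i * mMoment N w (g (j : ℕ) i))) n]
        exact Finset.sum_congr rfl fun i _ => Matrix.mul_assoc _ _ _
      have e2 : ∑ i : Fin n, (A (i : ℕ) * C) * mMoment N w (g (j : ℕ) (i : ℕ))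
          = (∑ i ∈ Finset.range n, A i * mMoment N w (g (j : ℕ) i)) * C := by
        rw [Finset.sum_mul,
          ← Fin.sum_univ_eq_sum_range (fun i => (A i * mMoment N w (g (j : ℕ) i)) * C) n]
        refine Finset.sum_congr rfl fun i _ => ?_
        rw [Matrix.mul_assoc, hmom, ← Matrix.mul_assoc]
      calc ∑ i : Fin n, (C * A (i : ℕ) - A (i : ℕ) * C) * mMoment N w (g (j : ℕ) (i : ℕ))
          = (∑ i : Fin n, (C * A (i : ℕ)) * mMoment N w (g (j : ℕ) (i : ℕ)))
            - ∑ i : Fin n, (A (i : ℕ) * C) * mMoment N w (g (j : ℕ) (i : ℕ)) := by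
            rw [← Finset.sum_sub_distrib]
            exact Finset.sum_congr rfl fun i _ => Matrix.sub_mul _ _ _
        _ = C * (- mMoment N w (g (j : ℕ) n)) - (- mMoment N w (g (j : ℕ) n)) * C := by
            rw [e1, e2, hS]
        _ = 0 := by rw [Matrix.mul_neg, Matrix.neg_mul, hmom, sub_self]
    have h2 := congrFun (congrFun key a) b
    simp only [Matrix.sum_apply, Matrix.mul_apply, Matrix.zero_apply] at h2
    simp only [hMe]
    exact h2

lemma comm_coeff_col {w : ℂ → Matrix (Fin N) (Fin N) ℂ} {C : Matrix (Fin N) (Fin N) ℂ}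
    (hmom : ∀ j : ℤ, C * mMoment N w j = mMoment N w j * C)
    {n : ℕ} (g : ℕ → ℕ → ℤ)
    (M : Matrix (Fin n × Fin N) (Fin n × Fin N) ℂ) (hM : IsUnit M)
    (hMe : ∀ (p q : Fin n × Fin N), M p q = mMoment N w (g (p.1 : ℕ) (q.1 : ℕ)) p.2 q.2)
    (A : ℕ → Matrix (Fin N) (Fin N) ℂ) (hAn : A n = 1)
    (hrel : ∀ j < n, ∑ i ∈ Finset.range (n + 1), mMoment N w (g j i) * A i = 0) :
    ∀ k, k < n → C * A k = A k * C := by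
  intro k hk
  have hDz := col_system M hM (fun i : Fin n => C * A (i : ℕ) - A (i : ℕ) * C) ?_ ⟨k, hk⟩
  · exact sub_eq_zero.mp hDz
  · intro j a b
    have hS : ∑ i ∈ Finset.range n, mMoment N w (g (j : ℕ) i) * A i
        = - mMoment N w (g (j : ℕ) n) := by
      have h := hrel (j : ℕ) j.isLt
      rw [Finset.sum_range_succ, hAn, Matrix.mul_one] at h
      exact eq_neg_of_add_eq_zero_left h
    have key : ∑ i : Fin n,
        mMoment N w (g (j : ℕ) (i : ℕ)) * (C * A (i : ℕ) - A (i : ℕ) * C) = 0 := by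
      have e1 : ∑ i : Fin n, mMoment N w (g (j : ℕ) (i : ℕ)) * (C * A (i : ℕ))
          = C * ∑ i ∈ Finset.range n, mMoment N w (g (j : ℕ) i) * A i := by
        rw [Finset.mul_sum,
          ← Fin.sum_univ_eq_sum_range (fun i => C * (mMoment N w (g (j : ℕ) i) * A i)) n]
        refine Finset.sum_congr rfl fun i _ => ?_
        rw [← Matrix.mul_assoc, ← hmom, Matrix.mul_assoc]
      have e2 : ∑ i : Fin n, mMoment N w (g (j : ℕ) (i : ℕ)) * (A (i : ℕ) * C)
          = (∑ i ∈ Finset.range n, mMoment N w (g (j : ℕ) i) * A i) * C := by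
        rw [Finset.sum_mul,
          ← Fin.sum_univ_eq_sum_range (fun i => (mMoment N w (g (j : ℕ) i) * A i) * C) n]
        exact Finset.sum_congr rfl fun i _ => (Matrix.mul_assoc _ _ _).symm
      calc ∑ i : Fin n, mMoment N w (g (j : ℕ) (i : ℕ)) * (C * A (i : ℕ) - A (i : ℕ) * C)
          = (∑ i : Fin n, mMoment N w (g (j : ℕ) (i : ℕ)) * (C * A (i : ℕ)))
            - ∑ i : Fin n, mMoment N w (g (j : ℕ) (i : ℕ)) * (A (i : ℕ) * C) := by
            rw [← Finset.sum_sub_distrib]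
            exact Finset.sum_congr rfl fun i _ => Matrix.mul_sub _ _ _
        _ = C * (- mMoment N w (g (j : ℕ) n)) - (- mMoment N w (g (j : ℕ) n)) * C := by
            rw [e1, e2, hS]
        _ = 0 := by rw [Matrix.mul_neg, Matrix.neg_mul, hmom, sub_self]
    have h2 := congrFun (congrFun key a) b
    simp only [Matrix.sum_apply, Matrix.mul_apply, Matrix.zero_apply] at h2
    simp only [hMe]
    exact h2

lemma comm_coeff_L1 {w : ℂ → Matrix (Fin N) (Fin N) ℂ} (hw : Continuous w)
    (hqd : QuasiDef N w) {P : ℕ → ℕ → Matrix (Fin N) (Fin N) ℂ} (hP : IsSzPL1 N w P)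
    {C : Matrix (Fin N) (Fin N) ℂ}
    (hmom : ∀ j : ℤ, C * mMoment N w j = mMoment N w j * C) :
    ∀ n k, C * P n k = P n k * C := by
  intro n k
  obtain ⟨hmon, htop, horth⟩ := hP n
  rcases lt_trichotomy k n with hk | rfl | hk
  · refine comm_coeff_row hmom (fun j i => (j : ℤ) - (i : ℤ)) _ (hqd n (by omega)).2
      (fun p q => rfl) (P n) hmon ?_ k hk
    intro j hj
    rw [← expand_L1 w hw (P n) n (j : ℤ)]
    exact horth j hj
  · rw [hmon, Matrix.one_mul, Matrix.mul_one]
  · rw [htop k hk, Matrix.mul_zero, Matrix.zero_mul]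

lemma comm_coeff_R1 {w : ℂ → Matrix (Fin N) (Fin N) ℂ} (hw : Continuous w)
    (hqd : QuasiDef N w) {P : ℕ → ℕ → Matrix (Fin N) (Fin N) ℂ} (hP : IsSzPR1 N w P)
    {C : Matrix (Fin N) (Fin N) ℂ}
    (hmom : ∀ j : ℤ, C * mMoment N w j = mMoment N w j * C) :
    ∀ n k, C * P n k = P n k * C := by
  intro n k
  obtain ⟨hmon, htop, horth⟩ := hP n
  rcases lt_trichotomy k n with hk | rfl | hk
  · refine comm_coeff_col hmom (fun j i => (j : ℤ) - (i : ℤ)) _ (hqd n (by omega)).1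
      (fun p q => rfl) (P n) hmon ?_ k hk
    intro j hj
    rw [← expand_R1 w hw (P n) n (j : ℤ)]
    exact horth j hj
  · rw [hmon, Matrix.one_mul, Matrix.mul_one]
  · rw [htop k hk, Matrix.mul_zero, Matrix.zero_mul]

lemma comm_coeff_L2 {w : ℂ → Matrix (Fin N) (Fin N) ℂ} (hw : Continuous w)
    (hqd : QuasiDef N w) {P : ℕ → ℕ → Matrix (Fin N) (Fin N) ℂ} (hP : IsSzPL2 N w P)
    {C : Matrix (Fin N) (Fin N) ℂ}
    (hmom : ∀ j : ℤ, C * mMoment N w j = mMoment N w j * C) :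
    ∀ n k, C * (P n k)ᴴ = (P n k)ᴴ * C := by
  intro n k
  obtain ⟨hmon, htop, horth⟩ := hP n
  rcases lt_trichotomy k n with hk | rfl | hk
  · refine comm_coeff_col hmom (fun j i => (i : ℤ) - (j : ℤ)) _ (hqd n (by omega)).2
      (fun p q => rfl) (fun i => (P n i)ᴴ)
      (by show (P n n)ᴴ = 1; rw [hmon, Matrix.conjTranspose_one]) ?_ k hk
    intro j hj
    rw [← expand_L2 w hw (P n) n j]
    exact horth j hj
  · rw [hmon, Matrix.conjTranspose_one, Matrix.one_mul, Matrix.mul_one]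
  · rw [htop k hk, Matrix.conjTranspose_zero, Matrix.mul_zero, Matrix.zero_mul]

lemma comm_coeff_R2 {w : ℂ → Matrix (Fin N) (Fin N) ℂ} (hw : Continuous w)
    (hqd : QuasiDef N w) {P : ℕ → ℕ → Matrix (Fin N) (Fin N) ℂ} (hP : IsSzPR2 N w P)
    {C : Matrix (Fin N) (Fin N) ℂ}
    (hmom : ∀ j : ℤ, C * mMoment N w j = mMoment N w j * C) :
    ∀ n k, C * (P n k)ᴴ = (P n k)ᴴ * C := by
  intro n k
  obtain ⟨hmon, htop, horth⟩ := hP n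
  rcases lt_trichotomy k n with hk | rfl | hk
  · refine comm_coeff_row hmom (fun j i => (i : ℤ) - (j : ℤ)) _ (hqd n (by omega)).1
      (fun p q => rfl) (fun i => (P n i)ᴴ)
      (by show (P n n)ᴴ = 1; rw [hmon, Matrix.conjTranspose_one]) ?_ k hk
    intro j hj
    rw [← expand_R2 w hw (P n) n j]
    exact horth j hj
  · rw [hmon, Matrix.conjTranspose_one, Matrix.one_mul, Matrix.mul_one]
  · rw [htop k hk, Matrix.conjTranspose_zero, Matrix.mul_zero, Matrix.zero_mul]


/-- a constant matrix commuting with the weight commutes with all moments,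
Szegő polynomials, reciprocal polynomials, Verblunsky matrices and quasi-tau matrices. -/
theorem statement4 {N : ℕ} (hN : 1 ≤ N) (w : ℂ → Matrix (Fin N) (Fin N) ℂ)
    (hw : Continuous w) (hqd : QuasiDef N w)
    (PL1 PR1 PL2 PR2 : ℕ → ℕ → Matrix (Fin N) (Fin N) ℂ)
    (hPL1 : IsSzPL1 N w PL1) (hPR1 : IsSzPR1 N w PR1)
    (hPL2 : IsSzPL2 N w PL2) (hPR2 : IsSzPR2 N w PR2)
    (C : Matrix (Fin N) (Fin N) ℂ)
    (hC : ∀ ζ : ℂ, ‖ζ‖ = 1 → C * w ζ = w ζ * C) :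
    (∀ j : ℤ, C * mMoment N w j = mMoment N w j * C) ∧
    (∀ n : ℕ, ∀ z : ℂ,
      C * mPolyEval (PL1 n) n z = mPolyEval (PL1 n) n z * C ∧
      C * mPolyEval (PR1 n) n z = mPolyEval (PR1 n) n z * C ∧
      C * mRecipEval (PL2 n) n z = mRecipEval (PL2 n) n z * C ∧
      C * mRecipEval (PR2 n) n z = mRecipEval (PR2 n) n z * C) ∧
    (∀ n : ℕ,
      C * szVer PL1 n = szVer PL1 n * C ∧
      C * szVer PR1 n = szVer PR1 n * C ∧
      C * (szVer PL2 n)ᴴ = (szVer PL2 n)ᴴ * C ∧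
      C * (szVer PR2 n)ᴴ = (szVer PR2 n)ᴴ * C) ∧
    (∀ n : ℕ,
      C * szHL N w PL1 n = szHL N w PL1 n * C ∧
      C * szHR N w PR1 n = szHR N w PR1 n * C) := by
  have hmom := comm_moment w hw C hC
  have hcL1 := comm_coeff_L1 hw hqd hPL1 hmom
  have hcR1 := comm_coeff_R1 hw hqd hPR1 hmom
  have hcL2 := comm_coeff_L2 hw hqd hPL2 hmom
  have hcR2 := comm_coeff_R2 hw hqd hPR2 hmom
  refine ⟨hmom, ?_, ?_, ?_⟩
  · intro n z
    refine ⟨?_, ?_, ?_, ?_⟩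
    · rw [mPolyEval]; exact comm_sum_smul _ _ _ (fun i _ => hcL1 n i)
    · rw [mPolyEval]; exact comm_sum_smul _ _ _ (fun i _ => hcR1 n i)
    · rw [mRecipEval]; exact comm_sum_smul _ _ _ (fun i _ => hcL2 n (n - i))
    · rw [mRecipEval]; exact comm_sum_smul _ _ _ (fun i _ => hcR2 n (n - i))
  · intro n
    refine ⟨?_, ?_, ?_, ?_⟩
    · rw [szVer, mPolyEval_zero]; exact hcL1 n 0
    · rw [szVer, mPolyEval_zero]; exact hcR1 n 0
    · rw [szVer, mPolyEval_zero]; exact hcL2 n 0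
    · rw [szVer, mPolyEval_zero]; exact hcR2 n 0
  · intro n
    constructor
    · rw [szHL, expand_L1 w hw (PL1 n) n (n : ℤ)]
      exact comm_sum_mul _ _ _ (fun i _ => hcL1 n i) (fun i _ => hmom _)
    · rw [szHR, expand_R1 w hw (PR1 n) n (n : ℤ)]
      exact comm_sum_mul _ _ _ (fun i _ => hmom _) (fun i _ => hcR1 n i)
end Helpers
end
end

section
/- Assume w is quasi-definite. Then for every n ≥ 1 the following Szegő recursion relations hold: (i) P^L_{1,n+1}(z) = z·P^L_{1,n}(z) + α^L_{1,n+1}·P̃^R_{2,n}(z) for all z ∈ ℂ; (ii) P̃^R_{2,n}(z) = (α^R_{2,n})†·P^L_{1,n}(z) + (I − (α^R_{2,n})†·α^L_{1,n})·P̃^R_{2,n−1}(z) for all z ∈ ℂ; (iii) Q^L_{1,n+1}(z) = Q^L_{1,n}(z) + α^L_{1,n+1}·Q^R_{2,n}(z) for all z with |z| ≠ 1; (iv) z·Q^R_{2,n}(z) = (α^R_{2,n})†·Q^L_{1,n}(z) + (I − (α^R_{2,n})†·α^L_{1,n})·Q^R_{2,n−1}(z) for all z with |z| ≠ 1. -/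
open Complex Matrix

noncomputable section

namespace Sz8


abbrev Mat (N : ℕ) := Matrix (Fin N) (Fin N) ℂ

def CC {N : ℕ} (f : ℂ → Mat N) : Prop :=
  ∀ i j, Continuous fun θ : ℝ => f (Complex.exp (θ * Complex.I)) i j

lemma contU : Continuous fun θ : ℝ => Complex.exp (θ * Complex.I) :=
  Complex.continuous_exp.comp (Complex.continuous_ofReal.mul continuous_const)

lemma Une (θ : ℝ) : Complex.exp (θ * Complex.I) ≠ 0 := Complex.exp_ne_zero _

lemma absU (θ : ℝ) : ‖Complex.exp (θ * Complex.I)‖ = 1 := by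
  simp [Complex.norm_exp]

lemma conjU (θ : ℝ) : (starRingEnd ℂ) (Complex.exp (θ * Complex.I)) = (Complex.exp (θ * Complex.I))⁻¹ := by
  rw [← Complex.exp_conj, ← Complex.exp_neg]
  congr 1
  simp [mul_comm]

lemma contZpow (t : ℤ) : Continuous fun θ : ℝ => Complex.exp (θ * Complex.I) ^ t :=
  contU.zpow₀ t fun θ => Or.inl (Une θ)

lemma invNe {z : ℂ} (hz : ‖z‖ ≠ 1) (θ : ℝ) :
    1 - (Complex.exp (θ * Complex.I))⁻¹ * z ≠ 0 := by
  intro h0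
  apply hz
  have hz' : z = Complex.exp (θ * Complex.I) := by
    field_simp at h0
    linear_combination -h0
  rw [hz', absU]

lemma contInv {z : ℂ} (hz : ‖z‖ ≠ 1) :
    Continuous fun θ : ℝ => (1 - (Complex.exp (θ * Complex.I))⁻¹ * z)⁻¹ :=
  Continuous.inv₀ (continuous_const.sub ((contU.inv₀ Une).mul continuous_const)) (invNe hz)

lemma CC.w {N : ℕ} {w : ℂ → Mat N} (hw : Continuous w) : CC w := fun i j =>
  ((continuous_apply j).comp ((continuous_apply i).comp hw)).comp contU


variable {N : ℕ}

lemma CC.constMul {f : ℂ → Mat N} (hf : CC f) (A : Mat N) : CC (fun ζ => A * f ζ) := by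
  intro i j
  simp only [Matrix.mul_apply]
  exact continuous_finset_sum _ fun b _ => continuous_const.mul (hf b j)

lemma CC.add {f g : ℂ → Mat N} (hf : CC f) (hg : CC g) : CC (fun ζ => f ζ + g ζ) := by
  intro i j; exact (hf i j).add (hg i j)

lemma CC.sub {f g : ℂ → Mat N} (hf : CC f) (hg : CC g) : CC (fun ζ => f ζ - g ζ) := by
  intro i j; exact (hf i j).sub (hg i j)

lemma circInt_congr {f g : ℂ → Mat N}
    (h : ∀ θ : ℝ, f (Complex.exp (θ * Complex.I)) = g (Complex.exp (θ * Complex.I))) :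
    circInt N f = circInt N g := by
  ext i j
  simp only [circInt, Matrix.of_apply]
  congr 1
  apply intervalIntegral.integral_congr
  intro θ _
  simp only [h θ]

lemma circInt_add {f g : ℂ → Mat N} (hf : CC f) (hg : CC g) :
    circInt N (fun ζ => f ζ + g ζ) = circInt N f + circInt N g := by
  ext i j
  simp only [circInt, Matrix.of_apply, Matrix.add_apply]
  rw [intervalIntegral.integral_add ((hf i j).intervalIntegrable _ _)
    ((hg i j).intervalIntegrable _ _), smul_add]

lemma circInt_sub {f g : ℂ → Mat N} (hf : CC f) (hg : CC g) :
    circInt N (fun ζ => f ζ - g ζ) = circInt N f - circInt N g := by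
  ext i j
  simp only [circInt, Matrix.of_apply, Matrix.sub_apply]
  rw [intervalIntegral.integral_sub ((hf i j).intervalIntegrable _ _)
    ((hg i j).intervalIntegrable _ _), smul_sub]

lemma circInt_sum {ι : Type*} (s : Finset ι) (f : ι → ℂ → Mat N)
    (hf : ∀ i ∈ s, CC (f i)) :
    circInt N (fun ζ => ∑ i ∈ s, f i ζ) = ∑ i ∈ s, circInt N (f i) := by
  ext a b
  simp only [circInt, Matrix.of_apply, Matrix.sum_apply]
  rw [show (fun θ : ℝ => ∑ i ∈ s, f i (Complex.exp (θ * Complex.I)) a b) =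
      fun θ : ℝ => ∑ i ∈ s, (fun θ' : ℝ => f i (Complex.exp (θ' * Complex.I)) a b) θ from rfl,
    intervalIntegral.integral_finset_sum (fun i hi => ((hf i hi) a b).intervalIntegrable _ _),
    Finset.smul_sum]

lemma circInt_constMul {f : ℂ → Mat N} (hf : CC f) (A : Mat N) :
    circInt N (fun ζ => A * f ζ) = A * circInt N f := by
  ext i j
  simp only [circInt, Matrix.of_apply, Matrix.mul_apply]
  rw [intervalIntegral.integral_finset_sum
    (fun b _ => (show Continuous fun θ : ℝ => A i b * f (Complex.exp (θ * Complex.I)) b j from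
      continuous_const.mul (hf b j)).intervalIntegrable _ _), Finset.smul_sum]
  congr 1
  ext b
  rw [intervalIntegral.integral_const_mul, mul_smul_comm]

lemma circInt_zsmul {f : ℂ → Mat N} (z : ℂ) :
    circInt N (fun ζ => z • f ζ) = z • circInt N f := by
  ext i j
  simp only [circInt, Matrix.of_apply, Matrix.smul_apply, smul_eq_mul]
  rw [intervalIntegral.integral_const_mul, mul_smul_comm]


variable (w : ℂ → Mat N)

lemma CC.zsmul_w (hw : Continuous w) (t : ℤ) : CC (fun ζ => (ζ ^ t : ℂ) • w ζ) := by
  intro i j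
  simp only [Matrix.smul_apply, smul_eq_mul]
  exact (contZpow t).mul ((CC.w hw) i j)

lemma circInt_laurent (hw : Continuous w) (m : ℕ) (d : ℕ → Mat N) (e : ℕ → ℤ) (t : ℤ) :
    circInt N (fun ζ => (ζ ^ t : ℂ) • ((∑ k ∈ Finset.range m, (ζ ^ (e k) : ℂ) • d k) * w ζ)) =
    ∑ k ∈ Finset.range m, d k * mMoment N w (-(t + e k)) := by
  rw [circInt_congr (g := fun ζ => ∑ k ∈ Finset.range m, d k * ((ζ ^ (t + e k) : ℂ) • w ζ)) ?_]
  · rw [circInt_sum _ _ (fun k _ => (CC.zsmul_w w hw _).constMul _)]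
    refine Finset.sum_congr rfl fun k _ => ?_
    rw [circInt_constMul (CC.zsmul_w w hw _) (d k)]
    unfold mMoment
    simp only [neg_neg]
  · intro θ
    have hne : Complex.exp (θ * Complex.I) ≠ 0 := Une θ
    rw [Finset.sum_mul, Finset.smul_sum]
    refine Finset.sum_congr rfl fun k _ => ?_
    rw [smul_mul_assoc, smul_smul, ← zpow_add₀ hne, mul_smul_comm]

lemma mPolyEval_as_zpow (c : ℕ → Mat N) (n : ℕ) (ζ : ℂ) :
    mPolyEval c n ζ = ∑ k ∈ Finset.range (n + 1), (ζ ^ (k : ℤ) : ℂ) • c k := by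
  simp [mPolyEval, zpow_natCast]

lemma mRecipEval_as_zpow (c : ℕ → Mat N) (n : ℕ) (ζ : ℂ) :
    mRecipEval c n ζ = ∑ k ∈ Finset.range (n + 1), (ζ ^ (k : ℤ) : ℂ) • (c (n - k))ᴴ := by
  simp [mRecipEval, zpow_natCast]

lemma conjT_polyEval (c : ℕ → Mat N) (n : ℕ) (θ : ℝ) :
    (mPolyEval c n (Complex.exp (θ * Complex.I)))ᴴ =
    ∑ k ∈ Finset.range (n + 1),
      ((Complex.exp (θ * Complex.I)) ^ (-(k : ℤ)) : ℂ) • (c k)ᴴ := by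
  unfold mPolyEval
  rw [Matrix.conjTranspose_sum]
  refine Finset.sum_congr rfl fun k _ => ?_
  rw [Matrix.conjTranspose_smul, star_pow,
    show star (Complex.exp (θ * Complex.I)) = (Complex.exp (θ * Complex.I))⁻¹ from conjU θ,
    ← zpow_natCast ((Complex.exp (θ * Complex.I))⁻¹) k, _root_.inv_zpow']

lemma orthoL {PL1 : ℕ → ℕ → Mat N} (hw : Continuous w) (hPL1 : IsSzPL1 N w PL1)
    (n j : ℕ) (hj : j < n) :
    ∑ k ∈ Finset.range (n + 1), PL1 n k * mMoment N w ((j : ℤ) - (k : ℤ)) = 0 := by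
  have h := (hPL1 n).2.2 j hj
  have e1 : circInt N (fun ζ => (ζ : ℂ) ^ (-(j : ℤ)) • (mPolyEval (PL1 n) n ζ * w ζ)) =
      ∑ k ∈ Finset.range (n + 1), PL1 n k * mMoment N w (-(-(j : ℤ) + (k : ℤ))) := by
    rw [← circInt_laurent w hw (n + 1) (PL1 n) (fun k => (k : ℤ)) (-(j : ℤ))]
    apply circInt_congr
    intro θ
    rw [mPolyEval_as_zpow]
  rw [h] at e1
  have e2 : ∀ k : ℕ, (-(-(j : ℤ) + (k : ℤ))) = (j : ℤ) - (k : ℤ) := by intro k; ring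
  calc ∑ k ∈ Finset.range (n + 1), PL1 n k * mMoment N w ((j : ℤ) - (k : ℤ))
      = ∑ k ∈ Finset.range (n + 1), PL1 n k * mMoment N w (-(-(j : ℤ) + (k : ℤ))) := by
        refine Finset.sum_congr rfl fun k _ => ?_; rw [e2]
    _ = 0 := e1.symm

lemma orthoR {PR2 : ℕ → ℕ → Mat N} (hw : Continuous w) (hPR2 : IsSzPR2 N w PR2)
    (n j : ℕ) (hj : j < n) :
    ∑ k ∈ Finset.range (n + 1), (PR2 n k)ᴴ * mMoment N w ((k : ℤ) - (j : ℤ)) = 0 := by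
  have h := (hPR2 n).2.2 j hj
  have e1 : circInt N (fun ζ => (ζ : ℂ) ^ j • ((mPolyEval (PR2 n) n ζ)ᴴ * w ζ)) =
      ∑ k ∈ Finset.range (n + 1), (PR2 n k)ᴴ * mMoment N w (-((j : ℤ) + -(k : ℤ))) := by
    rw [← circInt_laurent w hw (n + 1) (fun k => (PR2 n k)ᴴ) (fun k => -(k : ℤ)) ((j : ℤ))]
    apply circInt_congr
    intro θ
    rw [conjT_polyEval, zpow_natCast]
  rw [h] at e1
  calc ∑ k ∈ Finset.range (n + 1), (PR2 n k)ᴴ * mMoment N w ((k : ℤ) - (j : ℤ))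
      = ∑ k ∈ Finset.range (n + 1), (PR2 n k)ᴴ * mMoment N w (-((j : ℤ) + -(k : ℤ))) := by
        refine Finset.sum_congr rfl fun k _ => ?_
        congr 1
        ring
    _ = 0 := e1.symm

lemma recipOrtho {PR2 : ℕ → ℕ → Mat N} (hw : Continuous w) (hPR2 : IsSzPR2 N w PR2)
    (n j : ℕ) (h1 : 1 ≤ j) (h2 : j ≤ n) :
    ∑ k ∈ Finset.range (n + 1), (PR2 n (n - k))ᴴ * mMoment N w ((j : ℤ) - (k : ℤ)) = 0 := by
  have h := orthoR w hw hPR2 n (n - j) (by omega)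
  calc ∑ k ∈ Finset.range (n + 1), (PR2 n (n - k))ᴴ * mMoment N w ((j : ℤ) - (k : ℤ))
      = ∑ k ∈ Finset.range (n + 1),
          (fun m => (PR2 n m)ᴴ * mMoment N w ((m : ℤ) - ((n - j : ℕ) : ℤ))) (n + 1 - 1 - k) := by
        refine Finset.sum_congr rfl fun k hk => ?_
        have hk' : k ≤ n := by have := Finset.mem_range.mp hk; omega
        simp only [Nat.add_sub_cancel]
        have e5 : ((j : ℤ) - (k : ℤ)) = (((n - k : ℕ) : ℤ) - ((n - j : ℕ) : ℤ)) := by omega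
        rw [e5]
    _ = ∑ m ∈ Finset.range (n + 1), (PR2 n m)ᴴ * mMoment N w ((m : ℤ) - ((n - j : ℕ) : ℤ)) :=
        Finset.sum_range_reflect
          (fun m => (PR2 n m)ᴴ * mMoment N w ((m : ℤ) - ((n - j : ℕ) : ℤ))) (n + 1)
    _ = 0 := h

lemma mPolyEval_zero (c : ℕ → Mat N) (n : ℕ) : mPolyEval c n 0 = c 0 := by
  unfold mPolyEval
  rw [Finset.sum_eq_single 0]
  · simp
  · intro k _ hk
    simp [zero_pow hk]
  · simp

lemma szVer_eq (P : ℕ → ℕ → Mat N) (n : ℕ) : szVer P n = P n 0 := mPolyEval_zero _ _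

lemma uniq (hqd : QuasiDef N w) (m : ℕ) (S : ℕ → Mat N)
    (hS0 : S 0 = 0)
    (hS : ∀ j : ℕ, 1 ≤ j → j ≤ m →
      ∑ k ∈ Finset.range (m + 1), S k * mMoment N w ((j : ℤ) - (k : ℤ)) = 0) :
    ∀ k, k ≤ m → S k = 0 := by
  rcases Nat.eq_zero_or_pos m with hm | hm
  · subst hm
    intro k hk
    interval_cases k
    exact hS0
  have hM := (hqd m hm).2
  set M : Matrix (Fin m × Fin N) (Fin m × Fin N) ℂ :=
    Matrix.of fun p q : Fin m × Fin N =>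
      mMoment N w ((q.1 : ℤ) - (p.1 : ℤ)) p.2 q.2 with hMdef
  have key : ∀ a : Fin N, ∀ k : Fin m, ∀ b : Fin N, S (k + 1) a b = 0 := by
    intro a
    set v : Fin m × Fin N → ℂ := fun p => S (p.1 + 1) a p.2 with hv
    have hvM : v ᵥ* M = 0 := by
      funext q
      have h0 := hS (q.1 + 1) (by omega) (by omega)
      have h1 := congrFun (congrFun h0 a) q.2
      simp only [Matrix.sum_apply, Matrix.mul_apply, Matrix.zero_apply] at h1
      rw [Finset.sum_range_succ'] at h1
      simp only [hS0, Matrix.zero_apply, zero_mul, Finset.sum_const_zero, add_zero] at h1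
      simp only [Matrix.vecMul, dotProduct, Pi.zero_apply]
      rw [Fintype.sum_prod_type]
      rw [← h1]
      rw [← Fin.sum_univ_eq_sum_range (fun i => ∑ x : Fin N,
        S (i + 1) a x * mMoment N w ((((q.1 : ℕ) + 1 : ℕ) : ℤ) - ((i + 1 : ℕ) : ℤ)) x q.2) m]
      refine Finset.sum_congr rfl fun k _ => ?_
      refine Finset.sum_congr rfl fun b _ => ?_
      simp only [hv, hMdef, Matrix.of_apply]
      congr 2
      omega
    have hvz : v = 0 := by
      have hd := (Matrix.isUnit_iff_isUnit_det M).mp hM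
      calc v = v ᵥ* (M * M⁻¹) := by rw [Matrix.mul_nonsing_inv M hd, Matrix.vecMul_one]
        _ = (v ᵥ* M) ᵥ* M⁻¹ := by rw [Matrix.vecMul_vecMul]
        _ = 0 := by rw [hvM, Matrix.zero_vecMul]
    intro k b
    exact congrFun hvz (k, b)
  intro k hk
  match k, hk with
  | 0, _ => exact hS0
  | (k + 1), hk =>
    ext a b
    simpa using key a ⟨k, by omega⟩ b

section main
variable {PL1 PR2 : ℕ → ℕ → Mat N}

lemma coeff_i (hw : Continuous w) (hqd : QuasiDef N w)
    (hPL1 : IsSzPL1 N w PL1) (hPR2 : IsSzPR2 N w PR2) (n : ℕ) (hn : 1 ≤ n) :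
    ∀ k, k ≤ n → PL1 (n + 1) k =
      (if k = 0 then 0 else PL1 n (k - 1)) + PL1 (n + 1) 0 * (PR2 n (n - k))ᴴ := by
  set α := PL1 (n + 1) 0 with hα
  set S : ℕ → Mat N := fun k =>
    PL1 (n + 1) k - (if k = 0 then 0 else PL1 n (k - 1)) - α * (PR2 n (n - k))ᴴ with hSdef
  have hS0 : S 0 = 0 := by
    simp [hSdef, (hPR2 n).1, hα]
  have hS : ∀ j : ℕ, 1 ≤ j → j ≤ n →
      ∑ k ∈ Finset.range (n + 1), S k * mMoment N w ((j : ℤ) - (k : ℤ)) = 0 := by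
    intro j h1 h2
    have T1 : ∑ k ∈ Finset.range (n + 1), PL1 (n + 1) k * mMoment N w ((j : ℤ) - (k : ℤ))
        = -mMoment N w ((j : ℤ) - ((n : ℤ) + 1)) := by
      have h := orthoL w hw hPL1 (n + 1) j (by omega)
      rw [Finset.sum_range_succ, (hPL1 (n + 1)).1, one_mul] at h
      have := eq_neg_of_add_eq_zero_left h
      rw [this]
      norm_cast
    have T2 : ∑ k ∈ Finset.range (n + 1),
        (if k = 0 then (0 : Mat N) else PL1 n (k - 1)) * mMoment N w ((j : ℤ) - (k : ℤ))
        = -mMoment N w ((j : ℤ) - ((n : ℤ) + 1)) := by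
      rw [Finset.sum_range_succ']
      simp only [Nat.add_sub_cancel, Nat.succ_ne_zero, ite_false, ite_true, zero_mul, add_zero]
      have h := orthoL w hw hPL1 n (j - 1) (by omega)
      rw [Finset.sum_range_succ, (hPL1 n).1, one_mul] at h
      have h' := eq_neg_of_add_eq_zero_left h
      calc ∑ i ∈ Finset.range n, PL1 n i * mMoment N w ((j : ℤ) - ((i : ℕ) + 1 : ℕ))
          = ∑ i ∈ Finset.range n, PL1 n i * mMoment N w (((j - 1 : ℕ) : ℤ) - (i : ℤ)) := by
            refine Finset.sum_congr rfl fun i _ => ?_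
            have e5 : ((j : ℤ) - ((i : ℕ) + 1 : ℕ)) = (((j - 1 : ℕ) : ℤ) - (i : ℤ)) := by omega
            rw [e5]
        _ = -mMoment N w (((j - 1 : ℕ) : ℤ) - (n : ℤ)) := h'
        _ = -mMoment N w ((j : ℤ) - ((n : ℤ) + 1)) := by
            have e6 : (((j - 1 : ℕ) : ℤ) - (n : ℤ)) = ((j : ℤ) - ((n : ℤ) + 1)) := by omega
            rw [e6]
    have T3 : ∑ k ∈ Finset.range (n + 1),
        (α * (PR2 n (n - k))ᴴ) * mMoment N w ((j : ℤ) - (k : ℤ)) = 0 := by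
      calc ∑ k ∈ Finset.range (n + 1),
            (α * (PR2 n (n - k))ᴴ) * mMoment N w ((j : ℤ) - (k : ℤ))
          = α * ∑ k ∈ Finset.range (n + 1),
            (PR2 n (n - k))ᴴ * mMoment N w ((j : ℤ) - (k : ℤ)) := by
            rw [Finset.mul_sum]
            exact Finset.sum_congr rfl fun k _ => mul_assoc _ _ _
        _ = 0 := by rw [recipOrtho w hw hPR2 n j h1 h2, mul_zero]
    have expand : ∀ k ∈ Finset.range (n + 1),
        S k * mMoment N w ((j : ℤ) - (k : ℤ)) =
        PL1 (n + 1) k * mMoment N w ((j : ℤ) - (k : ℤ))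
        - (if k = 0 then (0 : Mat N) else PL1 n (k - 1)) * mMoment N w ((j : ℤ) - (k : ℤ))
        - (α * (PR2 n (n - k))ᴴ) * mMoment N w ((j : ℤ) - (k : ℤ)) := by
      intro k _
      rw [hSdef]
      simp only [sub_mul]
    rw [Finset.sum_congr rfl expand]
    simp only [Finset.sum_sub_distrib]
    rw [T1, T2, T3]
    abel
  have huniq := uniq w hqd n S hS0 hS
  intro k hk
  have h := huniq k hk
  rw [hSdef] at h
  have h2 : PL1 (n + 1) k - ((if k = 0 then 0 else PL1 n (k - 1)) + α * (PR2 n (n - k))ᴴ) = 0 := by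
    rw [← sub_sub]
    exact h
  exact sub_eq_zero.mp h2

lemma coeff_ii (hw : Continuous w) (hqd : QuasiDef N w)
    (hPL1 : IsSzPL1 N w PL1) (hPR2 : IsSzPR2 N w PR2) (m : ℕ) :
    ∀ k, k ≤ m → (PR2 (m + 1) (m + 1 - k))ᴴ =
      (PR2 (m + 1) 0)ᴴ * PL1 (m + 1) k +
        (1 - (PR2 (m + 1) 0)ᴴ * PL1 (m + 1) 0) * (PR2 m (m - k))ᴴ := by
  set β : Mat N := 1 - (PR2 (m + 1) 0)ᴴ * PL1 (m + 1) 0 with hβ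
  set S : ℕ → Mat N := fun k =>
    (PR2 (m + 1) (m + 1 - k))ᴴ - (PR2 (m + 1) 0)ᴴ * PL1 (m + 1) k - β * (PR2 m (m - k))ᴴ
    with hSdef
  have hS0 : S 0 = 0 := by
    simp only [hSdef, Nat.sub_zero, (hPR2 (m + 1)).1, (hPR2 m).1, Matrix.conjTranspose_one,
      mul_one, hβ]
    abel
  have hS : ∀ j : ℕ, 1 ≤ j → j ≤ m →
      ∑ k ∈ Finset.range (m + 1), S k * mMoment N w ((j : ℤ) - (k : ℤ)) = 0 := by
    intro j h1 h2
    have TA : ∑ k ∈ Finset.range (m + 1),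
        (PR2 (m + 1) (m + 1 - k))ᴴ * mMoment N w ((j : ℤ) - (k : ℤ))
        = -((PR2 (m + 1) 0)ᴴ * mMoment N w ((j : ℤ) - ((m : ℤ) + 1))) := by
      have h := recipOrtho w hw hPR2 (m + 1) j (by omega) (by omega)
      rw [Finset.sum_range_succ, Nat.sub_self] at h
      have := eq_neg_of_add_eq_zero_left h
      rw [this]
      norm_cast
    have TB : ∑ k ∈ Finset.range (m + 1),
        ((PR2 (m + 1) 0)ᴴ * PL1 (m + 1) k) * mMoment N w ((j : ℤ) - (k : ℤ))
        = -((PR2 (m + 1) 0)ᴴ * mMoment N w ((j : ℤ) - ((m : ℤ) + 1))) := by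
      have h := orthoL w hw hPL1 (m + 1) j (by omega)
      rw [Finset.sum_range_succ, (hPL1 (m + 1)).1, one_mul] at h
      have h' := eq_neg_of_add_eq_zero_left h
      calc ∑ k ∈ Finset.range (m + 1),
            ((PR2 (m + 1) 0)ᴴ * PL1 (m + 1) k) * mMoment N w ((j : ℤ) - (k : ℤ))
          = (PR2 (m + 1) 0)ᴴ * ∑ k ∈ Finset.range (m + 1),
            PL1 (m + 1) k * mMoment N w ((j : ℤ) - (k : ℤ)) := by
            rw [Finset.mul_sum]
            exact Finset.sum_congr rfl fun k _ => mul_assoc _ _ _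
        _ = (PR2 (m + 1) 0)ᴴ * -mMoment N w ((j : ℤ) - ((m + 1 : ℕ) : ℤ)) := by rw [h']
        _ = -((PR2 (m + 1) 0)ᴴ * mMoment N w ((j : ℤ) - ((m : ℤ) + 1))) := by
            rw [mul_neg]
            norm_cast
    have TC : ∑ k ∈ Finset.range (m + 1),
        (β * (PR2 m (m - k))ᴴ) * mMoment N w ((j : ℤ) - (k : ℤ)) = 0 := by
      calc ∑ k ∈ Finset.range (m + 1),
            (β * (PR2 m (m - k))ᴴ) * mMoment N w ((j : ℤ) - (k : ℤ))
          = β * ∑ k ∈ Finset.range (m + 1),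
            (PR2 m (m - k))ᴴ * mMoment N w ((j : ℤ) - (k : ℤ)) := by
            rw [Finset.mul_sum]
            exact Finset.sum_congr rfl fun k _ => mul_assoc _ _ _
        _ = 0 := by rw [recipOrtho w hw hPR2 m j h1 h2, mul_zero]
    have expand : ∀ k ∈ Finset.range (m + 1),
        S k * mMoment N w ((j : ℤ) - (k : ℤ)) =
        (PR2 (m + 1) (m + 1 - k))ᴴ * mMoment N w ((j : ℤ) - (k : ℤ))
        - ((PR2 (m + 1) 0)ᴴ * PL1 (m + 1) k) * mMoment N w ((j : ℤ) - (k : ℤ))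
        - (β * (PR2 m (m - k))ᴴ) * mMoment N w ((j : ℤ) - (k : ℤ)) := by
      intro k _
      rw [hSdef]
      simp only [sub_mul]
    rw [Finset.sum_congr rfl expand]
    simp only [Finset.sum_sub_distrib]
    rw [TA, TB, TC]
    abel
  have huniq := uniq w hqd m S hS0 hS
  intro k hk
  have h := huniq k hk
  rw [hSdef] at h
  have h2 : (PR2 (m + 1) (m + 1 - k))ᴴ -
      ((PR2 (m + 1) 0)ᴴ * PL1 (m + 1) k + β * (PR2 m (m - k))ᴴ) = 0 := by
    rw [← sub_sub]
    exact h
  exact sub_eq_zero.mp h2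

lemma part_i (hw : Continuous w) (hqd : QuasiDef N w)
    (hPL1 : IsSzPL1 N w PL1) (hPR2 : IsSzPR2 N w PR2) (n : ℕ) (hn : 1 ≤ n) (z : ℂ) :
    mPolyEval (PL1 (n + 1)) (n + 1) z =
      z • mPolyEval (PL1 n) n z + szVer PL1 (n + 1) * mRecipEval (PR2 n) n z := by
  have key : ∀ k ∈ Finset.range (n + 1),
      (z ^ k • PL1 (n + 1) k : Mat N) =
      z ^ k • (if k = 0 then (0 : Mat N) else PL1 n (k - 1))
        + z ^ k • (PL1 (n + 1) 0 * (PR2 n (n - k))ᴴ) := by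
    intro k hk
    rw [coeff_i w hw hqd hPL1 hPR2 n hn k (by have := Finset.mem_range.mp hk; omega), smul_add]
  calc mPolyEval (PL1 (n + 1)) (n + 1) z
      = ∑ k ∈ Finset.range (n + 1), z ^ k • PL1 (n + 1) k + z ^ (n + 1) • (1 : Mat N) := by
        unfold mPolyEval
        rw [Finset.sum_range_succ, (hPL1 (n + 1)).1]
    _ = (∑ k ∈ Finset.range (n + 1), z ^ k • (if k = 0 then (0 : Mat N) else PL1 n (k - 1))
          + ∑ k ∈ Finset.range (n + 1), z ^ k • (PL1 (n + 1) 0 * (PR2 n (n - k))ᴴ))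
          + z ^ (n + 1) • (1 : Mat N) := by
        rw [Finset.sum_congr rfl key, Finset.sum_add_distrib]
    _ = (∑ i ∈ Finset.range n, z ^ (i + 1) • PL1 n i + z ^ (n + 1) • (1 : Mat N))
          + PL1 (n + 1) 0 * ∑ k ∈ Finset.range (n + 1), z ^ k • (PR2 n (n - k))ᴴ := by
        rw [Finset.sum_range_succ']
        simp only [Nat.add_sub_cancel, Nat.succ_ne_zero, ite_false, ite_true, smul_zero,
          add_zero]
        rw [Finset.mul_sum]
        have e0 : ∀ k ∈ Finset.range (n + 1),
            (z ^ k • (PL1 (n + 1) 0 * (PR2 n (n - k))ᴴ) : Mat N) =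
            PL1 (n + 1) 0 * (z ^ k • (PR2 n (n - k))ᴴ) := fun k _ => (mul_smul_comm _ _ _).symm
        rw [Finset.sum_congr rfl e0]
        abel
    _ = z • mPolyEval (PL1 n) n z + szVer PL1 (n + 1) * mRecipEval (PR2 n) n z := by
        rw [szVer_eq]
        unfold mPolyEval mRecipEval
        have e1 : z • (∑ k ∈ Finset.range (n + 1), z ^ k • PL1 n k) =
            ∑ i ∈ Finset.range n, z ^ (i + 1) • PL1 n i + z ^ (n + 1) • (1 : Mat N) := by
          rw [Finset.smul_sum]
          have e2 : ∀ k ∈ Finset.range (n + 1), z • (z ^ k • PL1 n k) = z ^ (k + 1) • PL1 n k := by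
            intro k _
            rw [smul_smul, ← pow_succ']
          rw [Finset.sum_congr rfl e2, Finset.sum_range_succ, (hPL1 n).1]
        rw [e1]

lemma part_ii (hw : Continuous w) (hqd : QuasiDef N w)
    (hPL1 : IsSzPL1 N w PL1) (hPR2 : IsSzPR2 N w PR2) (m : ℕ) (z : ℂ) :
    mRecipEval (PR2 (m + 1)) (m + 1) z =
      (szVer PR2 (m + 1))ᴴ * mPolyEval (PL1 (m + 1)) (m + 1) z +
        (1 - (szVer PR2 (m + 1))ᴴ * szVer PL1 (m + 1)) * mRecipEval (PR2 m) m z := by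
  set A := (PR2 (m + 1) 0)ᴴ with hA
  set B : Mat N := 1 - (PR2 (m + 1) 0)ᴴ * PL1 (m + 1) 0 with hB
  have key : ∀ k ∈ Finset.range (m + 1),
      (z ^ k • (PR2 (m + 1) (m + 1 - k))ᴴ : Mat N) =
      z ^ k • (A * PL1 (m + 1) k) + z ^ k • (B * (PR2 m (m - k))ᴴ) := by
    intro k hk
    rw [coeff_ii w hw hqd hPL1 hPR2 m k (by have := Finset.mem_range.mp hk; omega), smul_add]
  have hgoal : szVer PR2 (m + 1) = PR2 (m + 1) 0 := szVer_eq _ _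
  have hgoal2 : szVer PL1 (m + 1) = PL1 (m + 1) 0 := szVer_eq _ _
  rw [hgoal, hgoal2, ← hA, ← hB]
  calc mRecipEval (PR2 (m + 1)) (m + 1) z
      = ∑ k ∈ Finset.range (m + 1), z ^ k • (PR2 (m + 1) (m + 1 - k))ᴴ + z ^ (m + 1) • A := by
        unfold mRecipEval
        rw [Finset.sum_range_succ, Nat.sub_self]
    _ = (∑ k ∈ Finset.range (m + 1), z ^ k • (A * PL1 (m + 1) k)
          + ∑ k ∈ Finset.range (m + 1), z ^ k • (B * (PR2 m (m - k))ᴴ)) + z ^ (m + 1) • A := by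
        rw [Finset.sum_congr rfl key, Finset.sum_add_distrib]
    _ = A * mPolyEval (PL1 (m + 1)) (m + 1) z + B * mRecipEval (PR2 m) m z := by
        unfold mPolyEval mRecipEval
        rw [Finset.sum_range_succ (fun k => z ^ k • PL1 (m + 1) k) (m + 1), (hPL1 (m + 1)).1,
          mul_add, Finset.mul_sum, Finset.mul_sum]
        have e0 : ∀ k ∈ Finset.range (m + 1),
            (z ^ k • (A * PL1 (m + 1) k) : Mat N) = A * (z ^ k • PL1 (m + 1) k) :=
          fun k _ => (mul_smul_comm _ _ _).symm
        have e1 : ∀ k ∈ Finset.range (m + 1),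
            (z ^ k • (B * (PR2 m (m - k))ᴴ) : Mat N) = B * (z ^ k • (PR2 m (m - k))ᴴ) :=
          fun k _ => (mul_smul_comm _ _ _).symm
        rw [Finset.sum_congr rfl e0, Finset.sum_congr rfl e1]
        rw [show A * (z ^ (m + 1) • (1 : Mat N)) = z ^ (m + 1) • A by
          rw [mul_smul_comm, mul_one]]
        abel

lemma cont_poly_entry (c : ℕ → Mat N) (n : ℕ) (i j : Fin N) :
    Continuous fun ζ : ℂ => mPolyEval c n ζ i j := by
  simp only [mPolyEval, Matrix.sum_apply, Matrix.smul_apply, smul_eq_mul]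
  exact continuous_finset_sum _ fun k _ => (continuous_pow k).mul continuous_const

lemma cont_recip_entry (c : ℕ → Mat N) (n : ℕ) (i j : Fin N) :
    Continuous fun ζ : ℂ => mRecipEval c n ζ i j := by
  simp only [mRecipEval, Matrix.sum_apply, Matrix.smul_apply, smul_eq_mul]
  exact continuous_finset_sum _ fun k _ => (continuous_pow k).mul continuous_const

lemma CC.gF (hw : Continuous w) {g : ℂ → ℂ}
    (hg : Continuous fun θ : ℝ => g (Complex.exp (θ * Complex.I)))
    {F : ℂ → Mat N} (hF : ∀ i j, Continuous fun ζ : ℂ => F ζ i j) :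
    CC (fun ζ => g ζ • (F ζ * w ζ)) := by
  intro i j
  simp only [Matrix.smul_apply, smul_eq_mul, Matrix.mul_apply, Finset.mul_sum]
  exact continuous_finset_sum _ fun b _ =>
    hg.mul (((hF i b).comp contU).mul ((CC.w hw) b j))

lemma part_iii (hw : Continuous w) (hqd : QuasiDef N w)
    (hPL1 : IsSzPL1 N w PL1) (hPR2 : IsSzPR2 N w PR2) (n : ℕ) (hn : 1 ≤ n) (z : ℂ)
    (hz : ‖z‖ ≠ 1) :
    szQL1 N w PL1 (n + 1) z = szQL1 N w PL1 n z + szVer PL1 (n + 1) * szQR2 N w PR2 n z := by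
  set α := szVer PL1 (n + 1) with hα
  have hf1 : CC (fun ζ : ℂ => (ζ ^ (-(n : ℤ)) * (1 - ζ⁻¹ * z)⁻¹) •
      (mPolyEval (PL1 n) n ζ * w ζ)) :=
    CC.gF w hw ((contZpow _).mul (contInv hz)) (cont_poly_entry _ _)
  have hf2 : CC (fun ζ : ℂ => (ζ ^ (-((n : ℤ) + 1)) * (1 - ζ⁻¹ * z)⁻¹) •
      (mRecipEval (PR2 n) n ζ * w ζ)) :=
    CC.gF w hw ((contZpow _).mul (contInv hz)) (cont_recip_entry _ _)
  have hpt : ∀ θ : ℝ,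
      ((Complex.exp (θ * Complex.I)) ^ (-((n + 1 : ℕ) : ℤ)) *
          (1 - (Complex.exp (θ * Complex.I))⁻¹ * z)⁻¹) •
        (mPolyEval (PL1 (n + 1)) (n + 1) (Complex.exp (θ * Complex.I)) *
          w (Complex.exp (θ * Complex.I))) =
      ((Complex.exp (θ * Complex.I)) ^ (-(n : ℤ)) *
          (1 - (Complex.exp (θ * Complex.I))⁻¹ * z)⁻¹) •
        (mPolyEval (PL1 n) n (Complex.exp (θ * Complex.I)) * w (Complex.exp (θ * Complex.I)))
        + α * (((Complex.exp (θ * Complex.I)) ^ (-((n : ℤ) + 1)) *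
            (1 - (Complex.exp (θ * Complex.I))⁻¹ * z)⁻¹) •
          (mRecipEval (PR2 n) n (Complex.exp (θ * Complex.I)) *
            w (Complex.exp (θ * Complex.I)))) := by
    intro θ
    set ζ := Complex.exp (θ * Complex.I) with hζ
    have hne : ζ ≠ 0 := Une θ
    have hsc : ζ ^ (-((n + 1 : ℕ) : ℤ)) * ζ = ζ ^ (-(n : ℤ)) := by
      calc ζ ^ (-((n + 1 : ℕ) : ℤ)) * ζ = ζ ^ (-((n + 1 : ℕ) : ℤ)) * ζ ^ (1 : ℤ) := by
            rw [zpow_one]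
        _ = ζ ^ ((-((n + 1 : ℕ) : ℤ)) + 1) := (zpow_add₀ hne _ _).symm
        _ = ζ ^ (-(n : ℤ)) := by
            congr 1
            push_cast
            ring
    rw [part_i w hw hqd hPL1 hPR2 n hn ζ, ← hα, add_mul, smul_add]
    congr 1
    · rw [smul_mul_assoc, smul_smul]
      congr 1
      rw [mul_right_comm, hsc]
    · rw [mul_assoc, mul_smul_comm]
      norm_cast
  unfold szQL1 szQR2
  rw [circInt_congr (g := fun ζ : ℂ =>
      (ζ ^ (-(n : ℤ)) * (1 - ζ⁻¹ * z)⁻¹) • (mPolyEval (PL1 n) n ζ * w ζ)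
        + α * ((ζ ^ (-((n : ℤ) + 1)) * (1 - ζ⁻¹ * z)⁻¹) • (mRecipEval (PR2 n) n ζ * w ζ)))
    hpt, circInt_add hf1 (hf2.constMul α), circInt_constMul hf2 α]

lemma part_iv (hw : Continuous w) (hqd : QuasiDef N w)
    (hPL1 : IsSzPL1 N w PL1) (hPR2 : IsSzPR2 N w PR2) (m : ℕ) (z : ℂ)
    (hz : ‖z‖ ≠ 1) :
    z • szQR2 N w PR2 (m + 1) z =
      (szVer PR2 (m + 1))ᴴ * szQL1 N w PL1 (m + 1) z +
        (1 - (szVer PR2 (m + 1))ᴴ * szVer PL1 (m + 1)) * szQR2 N w PR2 m z := by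
  set A := (szVer PR2 (m + 1))ᴴ with hA
  set B : Mat N := 1 - (szVer PR2 (m + 1))ᴴ * szVer PL1 (m + 1) with hB
  have hfP : CC (fun ζ : ℂ => (ζ ^ (-((m + 1 : ℕ) : ℤ)) * (1 - ζ⁻¹ * z)⁻¹) •
      (mPolyEval (PL1 (m + 1)) (m + 1) ζ * w ζ)) :=
    CC.gF w hw ((contZpow _).mul (contInv hz)) (cont_poly_entry _ _)
  have hfR : CC (fun ζ : ℂ => (ζ ^ (-((m : ℤ) + 1)) * (1 - ζ⁻¹ * z)⁻¹) •
      (mRecipEval (PR2 m) m ζ * w ζ)) :=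
    CC.gF w hw ((contZpow _).mul (contInv hz)) (cont_recip_entry _ _)
  have hfH : CC (fun ζ : ℂ => (ζ ^ (-((m + 1 : ℕ) : ℤ)) : ℂ) •
      (mRecipEval (PR2 (m + 1)) (m + 1) ζ * w ζ)) :=
    CC.gF w hw (contZpow _) (cont_recip_entry _ _)
  have hzero : circInt N (fun ζ : ℂ => (ζ ^ (-((m + 1 : ℕ) : ℤ)) : ℂ) •
      (mRecipEval (PR2 (m + 1)) (m + 1) ζ * w ζ)) = 0 := by
    have ecg : circInt N (fun ζ : ℂ => (ζ ^ (-((m + 1 : ℕ) : ℤ)) : ℂ) •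
        (mRecipEval (PR2 (m + 1)) (m + 1) ζ * w ζ)) =
        circInt N (fun ζ : ℂ => (ζ ^ (-((m + 1 : ℕ) : ℤ)) : ℂ) •
        ((∑ k ∈ Finset.range (m + 1 + 1), (ζ ^ (k : ℤ) : ℂ) • (PR2 (m + 1) (m + 1 - k))ᴴ) *
          w ζ)) := by
      apply circInt_congr
      intro θ
      rw [mRecipEval_as_zpow]
    rw [ecg, circInt_laurent w hw (m + 1 + 1) (fun k => (PR2 (m + 1) (m + 1 - k))ᴴ)
      (fun k => (k : ℤ)) (-((m + 1 : ℕ) : ℤ))]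
    have h := recipOrtho w hw hPR2 (m + 1) (m + 1) (by omega) le_rfl
    refine Eq.trans (Finset.sum_congr rfl fun k _ => ?_) h
    have e : (-((-((m + 1 : ℕ) : ℤ)) + (k : ℤ))) = (((m + 1 : ℕ) : ℤ) - (k : ℤ)) := by ring
    rw [e]
  have hpt : ∀ θ : ℝ,
      z • (((Complex.exp (θ * Complex.I)) ^ (-(((m + 1 : ℕ) : ℤ) + 1)) *
          (1 - (Complex.exp (θ * Complex.I))⁻¹ * z)⁻¹) •
        (mRecipEval (PR2 (m + 1)) (m + 1) (Complex.exp (θ * Complex.I)) *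
          w (Complex.exp (θ * Complex.I)))) =
      (A * (((Complex.exp (θ * Complex.I)) ^ (-((m + 1 : ℕ) : ℤ)) *
            (1 - (Complex.exp (θ * Complex.I))⁻¹ * z)⁻¹) •
          (mPolyEval (PL1 (m + 1)) (m + 1) (Complex.exp (θ * Complex.I)) *
            w (Complex.exp (θ * Complex.I))))
        + B * (((Complex.exp (θ * Complex.I)) ^ (-((m : ℤ) + 1)) *
            (1 - (Complex.exp (θ * Complex.I))⁻¹ * z)⁻¹) •
          (mRecipEval (PR2 m) m (Complex.exp (θ * Complex.I)) *
            w (Complex.exp (θ * Complex.I)))))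
        - ((Complex.exp (θ * Complex.I)) ^ (-((m + 1 : ℕ) : ℤ)) : ℂ) •
          (mRecipEval (PR2 (m + 1)) (m + 1) (Complex.exp (θ * Complex.I)) *
            w (Complex.exp (θ * Complex.I))) := by
    intro θ
    set ζ := Complex.exp (θ * Complex.I) with hζ
    have hne : ζ ≠ 0 := Une θ
    have hden : 1 - ζ⁻¹ * z ≠ 0 := invNe hz θ
    have hsc : z * (ζ ^ (-(((m + 1 : ℕ) : ℤ)) + (-1)) * (1 - ζ⁻¹ * z)⁻¹) =
        ζ ^ (-((m + 1 : ℕ) : ℤ)) * (1 - ζ⁻¹ * z)⁻¹ - ζ ^ (-((m + 1 : ℕ) : ℤ)) := by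
      rw [zpow_add₀ hne, _root_.zpow_neg_one]
      have hds : ζ - z ≠ 0 := by
        intro h0
        apply hden
        have hzz : z = ζ := by linear_combination -h0
        rw [hzz, inv_mul_cancel₀ hne, sub_self]
      field_simp
      ring
    have hex : (-(((m + 1 : ℕ) : ℤ) + 1)) = (-(((m + 1 : ℕ) : ℤ)) + (-1)) := by ring
    rw [hex, smul_smul, hsc, sub_smul]
    congr 1
    rw [part_ii w hw hqd hPL1 hPR2 m ζ, ← hA, ← hB, add_mul, mul_assoc, mul_assoc,
      smul_add, mul_smul_comm, mul_smul_comm]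
    norm_cast
  unfold szQR2 szQL1
  rw [← circInt_zsmul z, circInt_congr (g := fun ζ : ℂ =>
      (A * ((ζ ^ (-((m + 1 : ℕ) : ℤ)) * (1 - ζ⁻¹ * z)⁻¹) •
          (mPolyEval (PL1 (m + 1)) (m + 1) ζ * w ζ))
        + B * ((ζ ^ (-((m : ℤ) + 1)) * (1 - ζ⁻¹ * z)⁻¹) • (mRecipEval (PR2 m) m ζ * w ζ)))
        - (ζ ^ (-((m + 1 : ℕ) : ℤ)) : ℂ) • (mRecipEval (PR2 (m + 1)) (m + 1) ζ * w ζ)) hpt,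
    circInt_sub ((hfP.constMul A).add (hfR.constMul B)) hfH,
    circInt_add (hfP.constMul A) (hfR.constMul B),
    circInt_constMul hfP A, circInt_constMul hfR B, hzero, sub_zero]

end main
end Sz8

/-- the Szegő recursion relations for the matrix Szegő polynomials, their
reciprocals, and the corresponding Cauchy transforms. -/
theorem statement8 {N : ℕ} (hN : 1 ≤ N) (w : ℂ → Matrix (Fin N) (Fin N) ℂ)
    (hw : Continuous w) (hqd : QuasiDef N w)
    (PL1 PR2 : ℕ → ℕ → Matrix (Fin N) (Fin N) ℂ)
    (hPL1 : IsSzPL1 N w PL1) (hPR2 : IsSzPR2 N w PR2) :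
    ∀ n : ℕ, 1 ≤ n →
      (∀ z : ℂ, mPolyEval (PL1 (n+1)) (n+1) z =
        z • mPolyEval (PL1 n) n z + szVer PL1 (n+1) * mRecipEval (PR2 n) n z) ∧
      (∀ z : ℂ, mRecipEval (PR2 n) n z =
        (szVer PR2 n)ᴴ * mPolyEval (PL1 n) n z +
          (1 - (szVer PR2 n)ᴴ * szVer PL1 n) * mRecipEval (PR2 (n-1)) (n-1) z) ∧
      (∀ z : ℂ, ‖z‖ ≠ 1 →
        szQL1 N w PL1 (n+1) z =
          szQL1 N w PL1 n z + szVer PL1 (n+1) * szQR2 N w PR2 n z) ∧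
      (∀ z : ℂ, ‖z‖ ≠ 1 →
        z • szQR2 N w PR2 n z =
          (szVer PR2 n)ᴴ * szQL1 N w PL1 n z +
            (1 - (szVer PR2 n)ᴴ * szVer PL1 n) * szQR2 N w PR2 (n-1) z) := by
  intro n hn
  obtain ⟨m, rfl⟩ : ∃ m, n = m + 1 := ⟨n - 1, by omega⟩
  refine ⟨fun z => Sz8.part_i w hw hqd hPL1 hPR2 (m + 1) (by omega) z,
    fun z => ?_, fun z hz => Sz8.part_iii w hw hqd hPL1 hPR2 (m + 1) (by omega) z hz,
    fun z hz => ?_⟩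
  · simpa using Sz8.part_ii w hw hqd hPL1 hPR2 m z
  · simpa using Sz8.part_iv w hw hqd hPL1 hPR2 m z hz
end
end
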